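/- For the translated doubled cone C(R,∞,h,φ) (the doubled cone C(R,∞,φ) shifted vertically by ±h with each sheet staying on its side of the plane): if R ≤ 0.2 then for all h ≥ 0 and φ ∈ [0,π/2], the Gaussian area satisfies |C(R,∞,h,φ)| ≤ |D(R,∞,h)| = 2 e^{-h²/4} e^{-R²/4}. -/

import Mathlib

open MeasureTheory Real
open Filter Set

lemma tendsto_aux (c m : ℝ) (hc : 0 < c) :
    Tendsto (fun x : ℝ => -(2*c^2) * Real.exp (-(x - m)^2 / (4*c^2))) atTop (nhds 0) := by
  have h1 : Tendsto (fun x : ℝ => -(x - m)^2 / (4*c^2)) atTop atBot := by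
    apply Tendsto.atBot_div_const (by positivity)
    apply tendsto_neg_atBot_iff.mpr
    have := (tendsto_pow_atTop (n := 2) (by norm_num)).comp (tendsto_atTop_add_const_right atTop (-m) tendsto_id)
    simpa [Function.comp_def, sub_eq_add_neg] using this
  have h2 := Real.tendsto_exp_atBot.comp h1
  have := h2.const_mul (-(2*c^2))
  simpa using this

lemma hasDeriv_aux (c m x : ℝ) (hc : 0 < c) :
    HasDerivAt (fun x : ℝ => -(2*c^2) * Real.exp (-(x - m)^2 / (4*c^2)))
      ((x - m) * Real.exp (-(x - m)^2 / (4*c^2))) x := by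
  have h : HasDerivAt (fun x : ℝ => -(x - m)^2 / (4*c^2)) (-(2*(x-m)) / (4*c^2)) x := by
    have : HasDerivAt (fun x : ℝ => (x - m)^2) (2*(x-m)) x := by
      simpa using ((hasDerivAt_id x).sub_const m).fun_pow 2
    simpa [neg_div] using this.neg.div_const (4*c^2)
  have := (h.exp).const_mul (-(2*c^2))
  refine this.congr_deriv ?_
  field_simp
  ring

lemma int_F (c m R : ℝ) (hc : 0 < c) (hmR : m ≤ R) :
    IntegrableOn (fun r => (r - m) * Real.exp (-(r-m)^2/(4*c^2))) (Set.Ioi R) ∧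
    ∫ r in Set.Ioi R, (r - m) * Real.exp (-(r-m)^2/(4*c^2))
      = 2*c^2 * Real.exp (-(R-m)^2/(4*c^2)) := by
  have hderiv : ∀ x ∈ Ici R, HasDerivAt (fun x : ℝ => -(2*c^2) * Real.exp (-(x - m)^2 / (4*c^2)))
      ((x - m) * Real.exp (-(x - m)^2 / (4*c^2))) x := fun x _ => hasDeriv_aux c m x hc
  have hpos : ∀ x ∈ Ioi R, 0 ≤ (x - m) * Real.exp (-(x - m)^2 / (4*c^2)) := by
    intro x hx
    have : 0 ≤ x - m := by simp only [mem_Ioi] at hx; linarith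
    positivity
  have ht := tendsto_aux c m hc
  refine ⟨integrableOn_Ioi_deriv_of_nonneg' hderiv hpos ht, ?_⟩
  rw [integral_Ioi_of_hasDerivAt_of_nonneg' hderiv hpos ht]
  ring

lemma int_G (c m : ℝ) (hc : 0 < c) :
    Integrable (fun r : ℝ => Real.exp (-(r-m)^2/(4*c^2))) ∧
    ∫ r : ℝ, Real.exp (-(r-m)^2/(4*c^2)) = 2 * c * Real.sqrt π := by
  have hb : (0:ℝ) < 1/(4*c^2) := by positivity
  have heq : ∀ r : ℝ, Real.exp (-(r-m)^2/(4*c^2)) = Real.exp (-(1/(4*c^2)) * (r-m)^2) := by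
    intro r; congr 1; field_simp
  constructor
  · simp_rw [heq]
    exact (integrable_exp_neg_mul_sq hb).comp_sub_right m
  · simp_rw [heq]
    rw [integral_sub_right_eq_self (fun x => Real.exp (-(1/(4*c^2)) * x^2)) m]
    rw [integral_gaussian]
    rw [show π / (1/(4*c^2)) = (2*c)^2 * π by field_simp; ring]
    rw [Real.sqrt_mul (by positivity), Real.sqrt_sq (by positivity)]


/-- Gaussian area of the translated doubled cone `C(R,∞,h,φ)`, whose sheets are the
graphs `z = ±(tan φ (r-R) + h)` over `r > R`:
`sec φ ∫_R^∞ r e^{-(r² + (tan φ (r-R) + h)²)/4} dr`. -/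
noncomputable def transConeArea (R h φ : ℝ) : ℝ :=
  (1 / Real.cos φ) *
    ∫ r in Set.Ioi R,
      r * Real.exp (-(r ^ 2 + (Real.tan φ * (r - R) + h) ^ 2) / 4)

set_option maxHeartbeats 1000000 in
/-- For `R ≤ 0.2`, all `h ≥ 0` and `φ ∈ [0,π/2]`, the Gaussian area of the translated
doubled cone is at most `|D(R,∞,h)| = 2 e^{-h²/4} e^{-R²/4}`. -/
theorem stmt_10 (R h φ : ℝ) (hR0 : 0 < R) (hR : R ≤ 0.2) (hh : 0 ≤ h)
    (hφ : φ ∈ Set.Icc 0 (π / 2)) :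
    transConeArea R h φ ≤ 2 * Real.exp (-h ^ 2 / 4) * Real.exp (-R ^ 2 / 4) := by
  obtain ⟨hφ0, hφ2⟩ := hφ
  rcases eq_or_lt_of_le hφ2 with heq | hlt
  · subst heq
    unfold transConeArea
    rw [Real.cos_pi_div_two]
    simp
    positivity
  unfold transConeArea
  set c := Real.cos φ with hcdef
  set t := Real.tan φ with htdef
  have hc : 0 < c := Real.cos_pos_of_mem_Ioo ⟨by linarith [Real.pi_pos], hlt⟩
  have hc1 : c ≤ 1 := Real.cos_le_one φ
  have ht : 0 ≤ t := by
    rw [htdef, Real.tan_eq_sin_div_cos]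
    exact div_nonneg (Real.sin_nonneg_of_nonneg_of_le_pi hφ0 (by linarith [Real.pi_pos])) hc.le
  have ht2 : t ^ 2 * c ^ 2 = 1 - c ^ 2 := by
    have htc : t * c = Real.sin φ := Real.tan_mul_cos (ne_of_gt hc)
    have hsc := Real.sin_sq_add_cos_sq φ
    rw [← hcdef] at hsc
    have h1 : t ^ 2 * c ^ 2 = Real.sin φ ^ 2 := by
      rw [show t ^ 2 * c ^ 2 = (t * c) ^ 2 by ring, htc]
    linarith
  set m := R * (1 - c ^ 2) with hm
  have hm0 : 0 ≤ m := by nlinarith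
  have hmR : m ≤ R := by nlinarith
  -- exponent identity
  have hexp : ∀ r : ℝ, r ^ 2 + (t * (r - R)) ^ 2 = (r - m) ^ 2 / c ^ 2 + R ^ 2 * (1 - c ^ 2) := by
    intro r
    rw [hm]
    field_simp
    nlinarith [ht2, sq_nonneg (r - R)]
  set Eh := Real.exp (-h ^ 2 / 4) with hEh
  set Ek := Real.exp (-(R ^ 2 * (1 - c ^ 2)) / 4) with hEk
  set E1 := Real.exp (-(R ^ 2 * c ^ 2) / 4) with hE1
  set E := Real.exp (-R ^ 2 / 4) with hE
  set G : ℝ → ℝ := fun r => Real.exp (-(r - m) ^ 2 / (4 * c ^ 2)) with hG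
  set F : ℝ → ℝ := fun r => (r - m) * Real.exp (-(r - m) ^ 2 / (4 * c ^ 2)) with hF
  set B : ℝ → ℝ := fun r => Eh * (Ek * (F r + m * G r)) with hB
  have hIF := int_F c m R hc hmR
  have hIG := int_G c m hc
  -- pointwise bound
  have hpt : ∀ r ∈ Ioi R,
      r * Real.exp (-(r ^ 2 + (t * (r - R) + h) ^ 2) / 4) ≤ B r := by
    intro r hr
    rw [mem_Ioi] at hr
    have hr0 : 0 < r := lt_trans hR0 hr
    have step1 : r * Real.exp (-(r ^ 2 + (t * (r - R) + h) ^ 2) / 4)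
        ≤ r * Real.exp (-(r ^ 2 + (t * (r - R)) ^ 2 + h ^ 2) / 4) := by
      apply mul_le_mul_of_nonneg_left _ hr0.le
      apply Real.exp_le_exp.mpr
      have : 0 ≤ t * (r - R) * h := by
        apply mul_nonneg (mul_nonneg ht (by linarith)) hh
      nlinarith
    have step2 : r * Real.exp (-(r ^ 2 + (t * (r - R)) ^ 2 + h ^ 2) / 4) = B r := by
      rw [hB]
      simp only [hF, hG]
      rw [hexp r, hEh, hEk]
      rw [show -(((r - m) ^ 2 / c ^ 2 + R ^ 2 * (1 - c ^ 2)) + h ^ 2) / 4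
          = (-h ^ 2 / 4) + ((-(r - m) ^ 2 / (4 * c ^ 2)) + (-(R ^ 2 * (1 - c ^ 2)) / 4)) by
        field_simp; ring]
      rw [Real.exp_add, Real.exp_add]
      ring
    exact step1.trans_eq step2
  -- integrability
  have hGR : IntegrableOn G (Ioi R) := hIG.1.integrableOn
  have hBint : IntegrableOn B (Ioi R) := by
    apply Integrable.const_mul
    apply Integrable.const_mul
    exact hIF.1.add (hGR.const_mul m)
  have hfmeas : AEStronglyMeasurable
      (fun r => r * Real.exp (-(r ^ 2 + (t * (r - R) + h) ^ 2) / 4))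
      (volume.restrict (Ioi R)) := by
    apply Continuous.aestronglyMeasurable
    fun_prop
  have hfint : IntegrableOn
      (fun r => r * Real.exp (-(r ^ 2 + (t * (r - R) + h) ^ 2) / 4)) (Ioi R) := by
    apply Integrable.mono' hBint hfmeas
    rw [ae_restrict_iff' measurableSet_Ioi]
    filter_upwards with r hr
    have hr0 : 0 < r := lt_trans hR0 hr
    rw [Real.norm_eq_abs, abs_of_nonneg (by positivity)]
    exact hpt r hr
  -- integral comparison
  have hintle : (∫ r in Ioi R, r * Real.exp (-(r ^ 2 + (t * (r - R) + h) ^ 2) / 4))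
      ≤ ∫ r in Ioi R, B r :=
    setIntegral_mono_on hfint hBint measurableSet_Ioi hpt
  set J := ∫ r in Ioi R, G r with hJdef
  have hintB : (∫ r in Ioi R, B r) = Eh * (Ek * (2 * c ^ 2 * E1 + m * J)) := by
    rw [hB]
    rw [integral_const_mul, integral_const_mul,
      integral_add hIF.1 (hGR.const_mul m), integral_const_mul]
    have harg : -(R - m) ^ 2 / (4 * c ^ 2) = -(R ^ 2 * c ^ 2) / 4 := by
      rw [hm]; field_simp; ring
    rw [show (∫ r in Ioi R, F r) = 2 * c ^ 2 * E1 by rw [hF, hE1, ← harg]; exact hIF.2]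
  have hJle : J ≤ 2 * c * Real.sqrt π := by
    rw [hJdef]
    exact (setIntegral_le_integral hIG.1 (ae_of_all _ fun x => (Real.exp_pos _).le)).trans_eq hIG.2
  have hJ0 : 0 ≤ J := setIntegral_nonneg measurableSet_Ioi fun x _ => (Real.exp_pos _).le
  -- numeric facts
  have hs2 : Real.sqrt π ≤ 2 := by
    have : Real.sqrt π ≤ Real.sqrt 4 := Real.sqrt_le_sqrt (by linarith [Real.pi_le_four])
    rwa [show (4:ℝ) = 2 ^ 2 by norm_num, Real.sqrt_sq (by norm_num : (0:ℝ) ≤ 2)] at this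
  have hs0 : 0 ≤ Real.sqrt π := Real.sqrt_nonneg _
  have hE1lb : 0.8 ≤ E1 := by
    have := Real.add_one_le_exp (-(R ^ 2 * c ^ 2) / 4)
    rw [← hE1] at this
    nlinarith
  have hEk1 : Ek ≤ 1 := by
    rw [hEk]
    apply Real.exp_le_one_iff.mpr
    nlinarith
  have hEkE1 : Ek * E1 = E := by
    rw [hEk, hE1, hE, ← Real.exp_add]
    congr 1
    ring
  have key : m * Real.sqrt π ≤ (1 - c) * E1 := by
    have h1 : R * (1 + c) * Real.sqrt π ≤ 0.8 := by nlinarith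
    have h2 : m * Real.sqrt π = (1 - c) * (R * (1 + c) * Real.sqrt π) := by rw [hm]; ring
    rw [h2]
    have : (1 - c) * (R * (1 + c) * Real.sqrt π) ≤ (1 - c) * 0.8 :=
      mul_le_mul_of_nonneg_left h1 (by linarith)
    nlinarith
  -- final
  calc (1 / c) * ∫ r in Ioi R, r * Real.exp (-(r ^ 2 + (t * (r - R) + h) ^ 2) / 4)
      ≤ (1 / c) * ∫ r in Ioi R, B r := by
        apply mul_le_mul_of_nonneg_left hintle (by positivity)
    _ = (1 / c) * (Eh * (Ek * (2 * c ^ 2 * E1 + m * J))) := by rw [hintB]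
    _ ≤ 2 * Eh * E := by
        rw [one_div, inv_mul_le_iff₀ hc]
        have hEh0 : 0 < Eh := Real.exp_pos _
        have hEk0 : 0 < Ek := Real.exp_pos _
        have t1 : m * J ≤ 2 * c * ((1 - c) * E1) := by
          have : m * J ≤ m * (2 * c * Real.sqrt π) := mul_le_mul_of_nonneg_left hJle hm0
          nlinarith
        have t2 : Ek * (2 * c ^ 2 * E1 + m * J) ≤ 2 * c * E := by
          have := mul_le_mul_of_nonneg_left t1 hEk0.le
          nlinarith [hEkE1]
        nlinarith [mul_le_mul_of_nonneg_left t2 hEh0.le]
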